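/- Let c be a proper 3-coloring of the m×n grid graph and F a set of edges. Then F is a forcing set for c if and only if F crosses every uniform cut for c, i.e., for every nonempty S ⊆ V with v₀ ∉ S such that c(u) − c(v) is constant over all edges {u,v} with u ∈ S, v ∉ S, some edge of F has exactly one endpoint in S. -/

import Mathlib

/-- Two vertices of the `m × n` grid graph are adjacent:
`(i,j)` is adjacent to `(i',j')` iff `|i-i'| + |j-j'| = 1`. -/
def GridAdj {m n : ℕ} (u v : Fin m × Fin n) : Prop :=
  |(u.1.val : ℤ) - (v.1.val : ℤ)| + |(u.2.val : ℤ) - (v.2.val : ℤ)| = 1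

/-- A proper `3`-coloring of the `m × n` grid graph. -/
def IsProperColoring {m n : ℕ} (c : Fin m × Fin n → ZMod 3) : Prop :=
  ∀ u v, GridAdj u v → c u ≠ c v

/-- The set of (unordered) edges of the `m × n` grid graph. -/
def GridEdges (m n : ℕ) : Set (Sym2 (Fin m × Fin n)) :=
  {e | ∃ u v, GridAdj u v ∧ e = s(u, v)}

/-- `F` is a forcing set for the proper `3`-coloring `c`: the only proper
`3`-coloring agreeing with `c` at the base vertex `v₀ = (0,0)` and having the same
color differences as `c` across every edge of `F` is `c` itself. -/
def IsForcing {m n : ℕ} [NeZero m] [NeZero n] (c : Fin m × Fin n → ZMod 3)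
    (F : Set (Sym2 (Fin m × Fin n))) : Prop :=
  ∀ c' : Fin m × Fin n → ZMod 3, IsProperColoring c' →
    c' (0, 0) = c (0, 0) →
    (∀ u v : Fin m × Fin n, GridAdj u v → s(u, v) ∈ F → c' v - c' u = c v - c u) →
    c' = c

/-- The checkerboard `3`-coloring of the grid, corresponding to the standard
Miura-ori mountain-valley assignment. -/
def checkerboard {m n : ℕ} : Fin m × Fin n → ZMod 3 :=
  fun v => if (v.1.val + v.2.val) % 2 = 0 then 0 else 1

lemma gridAdj_iff {m n : ℕ} (u v : Fin m × Fin n) :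
    GridAdj u v ↔
      (u.1.val = v.1.val ∧ (u.2.val + 1 = v.2.val ∨ v.2.val + 1 = u.2.val)) ∨
      (u.2.val = v.2.val ∧ (u.1.val + 1 = v.1.val ∨ v.1.val + 1 = u.1.val)) := by
  unfold GridAdj
  rw [Int.abs_eq_natAbs, Int.abs_eq_natAbs]
  omega

lemma gridAdj_symm {m n : ℕ} {u v : Fin m × Fin n} (h : GridAdj u v) : GridAdj v u := by
  rw [gridAdj_iff] at h ⊢; omega

def stp (x : ZMod 3) : ℤ := if x = 1 then 1 else -1

lemma stp_one_or (x : ZMod 3) : stp x = 1 ∨ stp x = -1 := by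
  unfold stp; split <;> simp

lemma stp_cast {x : ZMod 3} (hx : x ≠ 0) : ((stp x : ℤ) : ZMod 3) = x := by
  revert hx; revert x; decide

lemma stp_neg {x : ZMod 3} (hx : x ≠ 0) : stp (-x) = -stp x := by
  revert hx; revert x; decide

lemma stp_face {a₁ a₂ a₃ a₄ : ZMod 3} (h₁ : a₁ ≠ 0) (h₂ : a₂ ≠ 0) (h₃ : a₃ ≠ 0)
    (h₄ : a₄ ≠ 0) (h : a₁ + a₂ = a₃ + a₄) : stp a₁ + stp a₂ = stp a₃ + stp a₄ := by
  revert h₁ h₂ h₃ h₄ h; revert a₁ a₂ a₃ a₄; decide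

def Cx {m n : ℕ} (c : Fin m × Fin n → ZMod 3) (i j : ℕ) : ZMod 3 :=
  if h : i < m ∧ j < n then c (⟨i, h.1⟩, ⟨j, h.2⟩) else 0

lemma Cx_eq {m n : ℕ} (c : Fin m × Fin n → ZMod 3) {i j : ℕ} (hi : i < m) (hj : j < n) :
    Cx c i j = c (⟨i, hi⟩, ⟨j, hj⟩) := dif_pos ⟨hi, hj⟩

lemma adj_mk_horiz {m n : ℕ} {i j : ℕ} (hi : i < m) (hj : j + 1 < n) :
    GridAdj ((⟨i, hi⟩ : Fin m), (⟨j, by omega⟩ : Fin n)) ((⟨i, hi⟩ : Fin m), (⟨j+1, hj⟩ : Fin n)) := by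
  rw [gridAdj_iff]; simp

lemma adj_mk_vert {m n : ℕ} {i j : ℕ} (hi : i + 1 < m) (hj : j < n) :
    GridAdj ((⟨i, by omega⟩ : Fin m), (⟨j, hj⟩ : Fin n)) ((⟨i+1, hi⟩ : Fin m), (⟨j, hj⟩ : Fin n)) := by
  rw [gridAdj_iff]; simp

lemma Cx_horiz_ne {m n : ℕ} {c : Fin m × Fin n → ZMod 3} (hc : IsProperColoring c)
    {i j : ℕ} (hi : i < m) (hj : j + 1 < n) : Cx c i (j+1) - Cx c i j ≠ 0 := by
  rw [Cx_eq c hi hj, Cx_eq c hi (by omega : j < n)]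
  exact sub_ne_zero.mpr (Ne.symm (hc _ _ (adj_mk_horiz hi hj)))

lemma Cx_vert_ne {m n : ℕ} {c : Fin m × Fin n → ZMod 3} (hc : IsProperColoring c)
    {i j : ℕ} (hi : i + 1 < m) (hj : j < n) : Cx c (i+1) j - Cx c i j ≠ 0 := by
  rw [Cx_eq c hi hj, Cx_eq c (by omega : i < m) hj]
  exact sub_ne_zero.mpr (Ne.symm (hc _ _ (adj_mk_vert hi hj)))

def Hgt {m n : ℕ} (c : Fin m × Fin n → ZMod 3) (i j : ℕ) : ℤ :=
  (∑ a ∈ Finset.range i, stp (Cx c (a+1) 0 - Cx c a 0)) +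
  ∑ b ∈ Finset.range j, stp (Cx c i (b+1) - Cx c i b)

lemma Hgt_horiz {m n : ℕ} (c : Fin m × Fin n → ZMod 3) (i j : ℕ) :
    Hgt c i (j+1) - Hgt c i j = stp (Cx c i (j+1) - Cx c i j) := by
  simp [Hgt, Finset.sum_range_succ]

lemma Hgt_vert {m n : ℕ} {c : Fin m × Fin n → ZMod 3} (hc : IsProperColoring c)
    {i j : ℕ} (hi : i + 1 < m) (hj : j < n) :
    Hgt c (i+1) j - Hgt c i j = stp (Cx c (i+1) j - Cx c i j) := by
  induction j with
  | zero => simp [Hgt, Finset.sum_range_succ]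
  | succ j ih =>
    have hj' : j < n := by omega
    have key := stp_face (Cx_vert_ne hc hi hj') (Cx_horiz_ne (i := i+1) (j := j) hc (by omega) hj)
      (Cx_horiz_ne (i := i) (j := j) hc (by omega) hj) (Cx_vert_ne hc hi hj) (by ring)
    have e1 := Hgt_horiz c (i+1) j
    have e2 := Hgt_horiz c i j
    have := ih hj'
    linarith

def Hv {m n : ℕ} (c : Fin m × Fin n → ZMod 3) (p : Fin m × Fin n) : ℤ :=
  Hgt c p.1.val p.2.val

lemma Hv_step_right {m n : ℕ} {c : Fin m × Fin n → ZMod 3} (hc : IsProperColoring c)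
    (u v : Fin m × Fin n) (h1 : u.1.val = v.1.val) (h2 : u.2.val + 1 = v.2.val) :
    Hv c v - Hv c u = stp (c v - c u) := by
  obtain ⟨⟨i, hi⟩, ⟨j, hj⟩⟩ := u
  obtain ⟨⟨i', hi'⟩, ⟨j', hj'⟩⟩ := v
  simp only at h1 h2
  subst h1; subst h2
  calc Hgt c i (j+1) - Hgt c i j = stp (Cx c i (j+1) - Cx c i j) := Hgt_horiz c i j
    _ = _ := by rw [Cx_eq c hi' hj', Cx_eq c hi hj]

lemma Hv_step_up {m n : ℕ} {c : Fin m × Fin n → ZMod 3} (hc : IsProperColoring c)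
    (u v : Fin m × Fin n) (h1 : u.2.val = v.2.val) (h2 : u.1.val + 1 = v.1.val) :
    Hv c v - Hv c u = stp (c v - c u) := by
  obtain ⟨⟨i, hi⟩, ⟨j, hj⟩⟩ := u
  obtain ⟨⟨i', hi'⟩, ⟨j', hj'⟩⟩ := v
  simp only at h1 h2
  subst h1; subst h2
  calc Hgt c (i+1) j - Hgt c i j = stp (Cx c (i+1) j - Cx c i j) := Hgt_vert hc hi' hj
    _ = _ := by rw [Cx_eq c hi' hj', Cx_eq c hi hj]

lemma Hv_adj {m n : ℕ} {c : Fin m × Fin n → ZMod 3} (hc : IsProperColoring c)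
    {u v : Fin m × Fin n} (h : GridAdj u v) : Hv c v - Hv c u = stp (c v - c u) := by
  have hErev : ∀ u v : Fin m × Fin n, GridAdj u v →
      Hv c u - Hv c v = stp (c u - c v) → Hv c v - Hv c u = stp (c v - c u) := by
    intro u v hadj he
    have hne : c u - c v ≠ 0 := sub_ne_zero.mpr (hc u v hadj)
    have hsn : stp (-(c u - c v)) = -stp (c u - c v) := stp_neg hne
    rw [neg_sub] at hsn
    rw [hsn, ← he]; ring
  rcases (gridAdj_iff u v).1 h with ⟨h1, h2 | h2⟩ | ⟨h1, h2⟩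
  · exact Hv_step_right hc u v h1 h2
  · exact hErev u v h (Hv_step_right hc v u h1.symm h2)
  · rcases h2 with h2 | h2
    · exact Hv_step_up hc u v h1 h2
    · exact hErev u v h (Hv_step_up hc v u h1.symm h2)

lemma Hv_zero {m n : ℕ} [NeZero m] [NeZero n] (c : Fin m × Fin n → ZMod 3) :
    Hv c (0, 0) = 0 := by
  show Hgt c (0 : Fin m).val (0 : Fin n).val = 0
  rw [Fin.val_zero, Fin.val_zero]
  simp [Hgt]

lemma Hv_cast {m n : ℕ} [NeZero m] [NeZero n] {c : Fin m × Fin n → ZMod 3}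
    (hc : IsProperColoring c) (v : Fin m × Fin n) :
    ((Hv c v : ℤ) : ZMod 3) = c v - c (0, 0) := by
  have key : ∀ k (v : Fin m × Fin n), v.1.val + v.2.val = k →
      ((Hv c v : ℤ) : ZMod 3) = c v - c (0, 0) := by
    intro k
    induction k using Nat.strong_induction_on with
    | _ k ih =>
      intro v hv
      obtain ⟨⟨i, hi⟩, ⟨j, hj⟩⟩ := v
      simp only at hv
      match i, j, hv with
      | 0, 0, hv =>
        have h0 : ((0, 0) : Fin m × Fin n) = ((⟨0, hi⟩ : Fin m), (⟨0, hj⟩ : Fin n)) := by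
          ext <;> simp
        rw [← h0, Hv_zero]
        simp
      | 0, j+1, hv =>
        set u : Fin m × Fin n := ((⟨0, hi⟩ : Fin m), (⟨j, by omega⟩ : Fin n)) with hu
        set w : Fin m × Fin n := ((⟨0, hi⟩ : Fin m), (⟨j+1, hj⟩ : Fin n)) with hw
        have hadj : GridAdj u w := by rw [gridAdj_iff]; simp [hu, hw]
        have hst := Hv_adj hc hadj
        have hihu := ih (j) (by omega) u (by simp [hu])
        have hcw : ((Hv c w : ℤ) : ZMod 3) = ((Hv c u : ℤ) : ZMod 3) + ((stp (c w - c u) : ℤ) : ZMod 3) := by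
          rw [← Int.cast_add, ← hst]; ring_nf
        rw [hcw, hihu, stp_cast (sub_ne_zero.mpr (Ne.symm (hc u w hadj)))]
        ring
      | i+1, j, hv =>
        set u : Fin m × Fin n := ((⟨i, by omega⟩ : Fin m), (⟨j, hj⟩ : Fin n)) with hu
        set w : Fin m × Fin n := ((⟨i+1, hi⟩ : Fin m), (⟨j, hj⟩ : Fin n)) with hw
        have hadj : GridAdj u w := by rw [gridAdj_iff]; simp [hu, hw]
        have hst := Hv_adj hc hadj
        have hihu := ih (i + j) (by omega) u (by simp [hu])
        have hcw : ((Hv c w : ℤ) : ZMod 3) = ((Hv c u : ℤ) : ZMod 3) + ((stp (c w - c u) : ℤ) : ZMod 3) := by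
          rw [← Int.cast_add, ← hst]; ring_nf
        rw [hcw, hihu, stp_cast (sub_ne_zero.mpr (Ne.symm (hc u w hadj)))]
        ring
  exact key _ v rfl

/-- **Theorem 7 of the paper (main characterization).** A set `F` of grid edges is a
forcing set for the proper 3-coloring `c` if and only if `F` crosses every uniform
cut for `c`. -/
theorem forcing_iff_crosses_all_uniform_cuts {m n : ℕ} [NeZero m] [NeZero n]
    (c : Fin m × Fin n → ZMod 3) (hc : IsProperColoring c)
    (F : Set (Sym2 (Fin m × Fin n))) (hFE : F ⊆ GridEdges m n) :
    IsForcing c F ↔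
      ∀ S : Set (Fin m × Fin n), S.Nonempty → (0, 0) ∉ S →
        (∃ d : ZMod 3,
          ∀ u v : Fin m × Fin n, GridAdj u v → u ∈ S → v ∉ S → c u - c v = d) →
        ∃ u v : Fin m × Fin n, GridAdj u v ∧ u ∈ S ∧ v ∉ S ∧ s(u, v) ∈ F := by
  constructor
  · -- forcing → crosses every uniform cut
    rintro hf S hS hS0 ⟨d, hd⟩
    by_contra hcross
    push_neg at hcross
    obtain ⟨e, he0, hecompat⟩ :
        ∃ e : ZMod 3, e ≠ 0 ∧ ∀ u v, GridAdj u v → u ∈ S → v ∉ S → c u - c v + e ≠ 0 := by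
      by_cases hb : ∃ u v : Fin m × Fin n, GridAdj u v ∧ u ∈ S ∧ v ∉ S
      · obtain ⟨u₀, w₀, ha, hu₀, hw₀⟩ := hb
        have hd' := hd u₀ w₀ ha hu₀ hw₀
        have hd0 : d ≠ 0 := by rw [← hd']; exact sub_ne_zero.mpr (hc u₀ w₀ ha)
        refine ⟨d, hd0, fun u v hadj hu hv => ?_⟩
        rw [hd u v hadj hu hv]
        revert hd0; generalize d = x; revert x; decide
      · exact ⟨1, one_ne_zero, fun u v hadj hu hv => absurd ⟨u, v, hadj, hu, hv⟩ hb⟩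
    set c' : Fin m × Fin n → ZMod 3 := fun w => c w + S.indicator (fun _ => e) w with hcdef
    have hmem : ∀ w, w ∈ S → c' w = c w + e := fun w hw => by
      simp [hcdef, Set.indicator_of_mem hw]
    have hnmem : ∀ w, w ∉ S → c' w = c w := fun w hw => by
      simp [hcdef, Set.indicator_of_notMem hw]
    have hproper : IsProperColoring c' := by
      intro u v hadj
      by_cases hu : u ∈ S <;> by_cases hv : v ∈ S
      · rw [hmem u hu, hmem v hv]
        exact fun h => hc u v hadj (add_right_cancel h)
      · rw [hmem u hu, hnmem v hv]
        intro h
        exact hecompat u v hadj hu hv (by rw [← h]; ring)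
      · rw [hnmem u hu, hmem v hv]
        intro h
        exact hecompat v u (gridAdj_symm hadj) hv hu (by rw [h]; ring)
      · rw [hnmem u hu, hnmem v hv]; exact hc u v hadj
    have hFok : ∀ u v : Fin m × Fin n, GridAdj u v → s(u, v) ∈ F →
        c' v - c' u = c v - c u := by
      intro u v hadj hFm
      by_cases hu : u ∈ S <;> by_cases hv : v ∈ S
      · rw [hmem u hu, hmem v hv]; ring
      · exact absurd hFm (hcross u v hadj hu hv)
      · exact absurd (by rwa [Sym2.eq_swap] at hFm)
          (hcross v u (gridAdj_symm hadj) hv hu)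
      · rw [hnmem u hu, hnmem v hv]
    have hbase : c' (0, 0) = c (0, 0) := hnmem _ hS0
    have hceq := hf c' hproper hbase hFok
    obtain ⟨a, ha⟩ := hS
    have h2 : c' a = c a := congrFun hceq a
    rw [hmem a ha] at h2
    exact he0 (by simpa using h2)
  · -- crosses every uniform cut → forcing
    intro hcuts c' hc' hbase hF
    by_contra hne
    obtain ⟨w, hw⟩ := Function.ne_iff.mp hne
    set g : Fin m × Fin n → ℤ := fun v => Hv c' v - Hv c v with hg
    have hzero : g (0, 0) = 0 := by
      simp only [hg]
      rw [Hv_zero c', Hv_zero c]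
      ring
    have hcast : ∀ v, ((g v : ℤ) : ZMod 3) = c' v - c v := by
      intro v
      simp only [hg, Int.cast_sub]
      rw [Hv_cast hc', Hv_cast hc, hbase]
      ring
    have hgw : g w ≠ 0 := by
      intro h
      have := hcast w
      rw [h] at this
      exact hw (by simpa [sub_eq_zero] using this.symm)
    have hstep : ∀ u v : Fin m × Fin n, GridAdj u v →
        g v - g u = stp (c' v - c' u) - stp (c v - c u) := by
      intro u v h
      simp only [hg]
      rw [← Hv_adj hc' h, ← Hv_adj hc h]
      ring
    have hF' : ∀ u v : Fin m × Fin n, GridAdj u v → s(u, v) ∈ F → g v = g u := by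
      intro u v hadj hFm
      have hdd := hF u v hadj hFm
      have h0 : g v - g u = 0 := by rw [hstep u v hadj, hdd]; ring
      linarith
    have hboundary : ∀ u v : Fin m × Fin n, GridAdj u v → g u - g v = 2 →
        c u - c v = 2 := by
      intro u v hadj h2
      have hs := hstep u v hadj
      have o1 := stp_one_or (c' v - c' u)
      have o2 := stp_one_or (c v - c u)
      have hsv : stp (c v - c u) = 1 := by omega
      have : c v - c u = 1 := by
        rw [← stp_cast (sub_ne_zero.mpr (Ne.symm (hc u v hadj))), hsv]; norm_num
      rw [← neg_sub, this]; decide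
    have hboundary' : ∀ u v : Fin m × Fin n, GridAdj u v → g u - g v = -2 →
        c u - c v = 1 := by
      intro u v hadj h2
      have hs := hstep u v hadj
      have o1 := stp_one_or (c' v - c' u)
      have o2 := stp_one_or (c v - c u)
      have hsv : stp (c v - c u) = -1 := by omega
      have : c v - c u = 2 := by
        rw [← stp_cast (sub_ne_zero.mpr (Ne.symm (hc u v hadj))), hsv]; decide
      rw [← neg_sub, this]; decide
    have hstep2 : ∀ u v : Fin m × Fin n, GridAdj u v →
        g u - g v = 2 ∨ g u - g v = 0 ∨ g u - g v = -2 := by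
      intro u v hadj
      have hs := hstep u v hadj
      have o1 := stp_one_or (c' v - c' u)
      have o2 := stp_one_or (c v - c u)
      omega
    obtain ⟨p, -, hp⟩ := Finset.exists_max_image Finset.univ g ⟨w, Finset.mem_univ w⟩
    by_cases hM : 0 < g p
    · set S : Set (Fin m × Fin n) := {v | g v = g p} with hSdef
      have h1 : S.Nonempty := ⟨p, rfl⟩
      have h2 : ((0, 0) : Fin m × Fin n) ∉ S := by
        simp only [hSdef, Set.mem_setOf_eq, hzero]
        omega
      have h3 : ∃ d : ZMod 3, ∀ u v : Fin m × Fin n, GridAdj u v → u ∈ S → v ∉ S →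
          c u - c v = d := by
        refine ⟨2, fun u v hadj hu hv => ?_⟩
        have hgu : g u = g p := hu
        have hgv : g v < g p := lt_of_le_of_ne (hp v (Finset.mem_univ v)) hv
        have := hstep2 u v hadj
        exact hboundary u v hadj (by omega)
      obtain ⟨u, v, hadj, hu, hv, hFm⟩ := hcuts S h1 h2 h3
      have := hF' u v hadj hFm
      exact hv (by rw [hSdef, Set.mem_setOf_eq, this]; exact hu)
    · obtain ⟨q, -, hq⟩ := Finset.exists_min_image Finset.univ g ⟨w, Finset.mem_univ w⟩
      have hqneg : g q < 0 := by
        have h1 := hq w (Finset.mem_univ w)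
        have h2 := hp w (Finset.mem_univ w)
        omega
      set S : Set (Fin m × Fin n) := {v | g v = g q} with hSdef
      have h1 : S.Nonempty := ⟨q, rfl⟩
      have h2 : ((0, 0) : Fin m × Fin n) ∉ S := by
        simp only [hSdef, Set.mem_setOf_eq, hzero]
        omega
      have h3 : ∃ d : ZMod 3, ∀ u v : Fin m × Fin n, GridAdj u v → u ∈ S → v ∉ S →
          c u - c v = d := by
        refine ⟨1, fun u v hadj hu hv => ?_⟩
        have hgu : g u = g q := hu
        have hgv : g q < g v := lt_of_le_of_ne (hq v (Finset.mem_univ v)) (Ne.symm hv)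
        have := hstep2 u v hadj
        exact hboundary' u v hadj (by omega)
      obtain ⟨u, v, hadj, hu, hv, hFm⟩ := hcuts S h1 h2 h3
      have := hF' u v hadj hFm
      exact hv (by rw [hSdef, Set.mem_setOf_eq, this]; exact hu)
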